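/- (Happel–Reiten–Smalø tilting) Let H be a heart of a triangulated category D and let ⟨T, F⟩ be a torsion pair in H. Then the full subcategory H♯ = {E ∈ D : there exists an exact triangle A → E → B → A[1] with A ∈ F[1] and B ∈ T} is again a heart of D, with torsion pair ⟨F[1], T⟩; and the full subcategory H♭ = {E ∈ D : there exists an exact triangle A → E → B → A[1] with A ∈ F and B ∈ T[-1]} is again a heart of D, with torsion pair ⟨F, T[-1]⟩. -/

import Mathlib

open CategoryTheory CategoryTheory.Limits CategoryTheory.Pretriangulated

universe v u

variable {C : Type u} [Category.{v} C] [HasZeroObject C] [HasShift C ℤ] [Preadditive C]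
  [∀ n : ℤ, (CategoryTheory.shiftFunctor C n).Additive] [Pretriangulated C]

/-- The shift `S[k]` of a class of objects, closed under isomorphism. -/
def shiftSet (S : Set C) (k : ℤ) : Set C :=
  {X | ∃ A ∈ S, Nonempty (X ≅ A⟦k⟧)}

/-- An HN-filtration of an object `E` with respect to a class of objects `H`:
a tower of exact triangles `E_{i-1} → E_i → A_i → E_{i-1}[1]` with `E_0 = 0`,
`E_m = E` and `A_i ∈ H[k_i]` for a strictly decreasing sequence of integers `k_i`. -/
structure HNFiltration (H : Set C) (E : C) where
  m : ℕ
  deg : Fin m → ℤ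
  deg_strictAnti : ∀ i j : Fin m, i < j → deg j < deg i
  obj : Fin (m + 1) → C
  isZero_zero : IsZero (obj 0)
  obj_last : obj (Fin.last m) = E
  factor : Fin m → C
  factor_mem : ∀ i, factor i ∈ shiftSet H (deg i)
  ι : ∀ i : Fin m, obj i.castSucc ⟶ obj i.succ
  π : ∀ i : Fin m, obj i.succ ⟶ factor i
  δ : ∀ i : Fin m, factor i ⟶ (obj i.castSucc)⟦(1 : ℤ)⟧
  distinguished : ∀ i, Triangle.mk (ι i) (π i) (δ i) ∈ distTriang C

/-- A heart of a triangulated category: a full (isomorphism-closed) additive subcategory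
`H` such that (1) `Hom(H[k₁], H[k₂]) = 0` for `k₁ > k₂`, and (2) every nonzero object
admits an HN-filtration with respect to `H`. -/
structure IsHeart (H : Set C) : Prop where
  isoClosed : ∀ ⦃X Y : C⦄, (X ≅ Y) → X ∈ H → Y ∈ H
  hom_orth : ∀ (k₁ k₂ : ℤ), k₂ < k₁ → ∀ (A₁ A₂ : C),
    A₁ ∈ shiftSet H k₁ → A₂ ∈ shiftSet H k₂ → ∀ φ : A₁ ⟶ A₂, φ = 0
  filt : ∀ E : C, ¬ IsZero E → Nonempty (HNFiltration H E)

/-- A torsion pair `⟨T, F⟩` in a heart `H` of a triangulated category: `T, F ⊆ H` are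
isomorphism-closed, `Hom(T, F) = 0`, and every `E ∈ H` fits in an exact triangle
`E^T → E → E^F → E^T[1]` with `E^T ∈ T` and `E^F ∈ F`. -/
structure IsTorsionPair (H T F : Set C) : Prop where
  isoClosedT : ∀ ⦃X Y : C⦄, (X ≅ Y) → X ∈ T → Y ∈ T
  isoClosedF : ∀ ⦃X Y : C⦄, (X ≅ Y) → X ∈ F → Y ∈ F
  subsetT : T ⊆ H
  subsetF : F ⊆ H
  hom_zero : ∀ X ∈ T, ∀ Y ∈ F, ∀ φ : X ⟶ Y, φ = 0
  decomp : ∀ E ∈ H, ∃ (X Y : C) (f : X ⟶ E) (g : E ⟶ Y) (h : Y ⟶ X⟦(1 : ℤ)⟧),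
    X ∈ T ∧ Y ∈ F ∧ Triangle.mk f g h ∈ distTriang C

/-- The forward tilt `H♯` of a heart with respect to a torsion pair `⟨T, F⟩`:
objects `E` fitting in an exact triangle `A → E → B → A[1]` with `A ∈ F[1]`, `B ∈ T`. -/
def forwardTilt (T F : Set C) : Set C :=
  {E | ∃ (X Y : C) (f : X ⟶ E) (g : E ⟶ Y) (h : Y ⟶ X⟦(1 : ℤ)⟧),
    X ∈ shiftSet F 1 ∧ Y ∈ T ∧ Triangle.mk f g h ∈ distTriang C}

/-- The backward tilt `H♭` of a heart with respect to a torsion pair `⟨T, F⟩`: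
objects `E` fitting in an exact triangle `A → E → B → A[1]` with `A ∈ F`, `B ∈ T[-1]`. -/
def backwardTilt (T F : Set C) : Set C :=
  {E | ∃ (X Y : C) (f : X ⟶ E) (g : E ⟶ Y) (h : Y ⟶ X⟦(1 : ℤ)⟧),
    X ∈ F ∧ Y ∈ shiftSet T (-1) ∧ Triangle.mk f g h ∈ distTriang C}


section HRSAux
set_option linter.unusedSectionVars false
set_option maxHeartbeats 1000000

variable {C : Type u} [Category.{v} C] [HasZeroObject C] [HasShift C ℤ] [Preadditive C]
  [∀ n : ℤ, (CategoryTheory.shiftFunctor C n).Additive] [Pretriangulated C]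

/-- All morphisms from `X` to `Y` vanish. -/
def Z0 (X Y : C) : Prop := ∀ f : X ⟶ Y, f = 0

lemma Z0.conj {X X' Y Y' : C} (eX : X' ≅ X) (eY : Y' ≅ Y) (h : Z0 X Y) : Z0 X' Y' := by
  intro f
  calc f = eX.hom ≫ (eX.inv ≫ f ≫ eY.hom) ≫ eY.inv := by simp
  _ = 0 := by rw [h (eX.inv ≫ f ≫ eY.hom)]; simp

lemma Z0.of_src_isZero {X Y : C} (h : IsZero X) : Z0 X Y := fun f => h.eq_of_src f 0

lemma Z0.of_tgt_isZero {X Y : C} (h : IsZero Y) : Z0 X Y := fun f => h.eq_of_tgt f 0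

lemma Z0.shift {X Y : C} (h : Z0 X Y) (n : ℤ) : Z0 (X⟦n⟧) (Y⟦n⟧) := fun f => by
  obtain ⟨g, rfl⟩ := (shiftFunctor C n).map_surjective f
  rw [h g, Functor.map_zero]

lemma Z0.unshift {X Y : C} (n : ℤ) (h : Z0 (X⟦n⟧) (Y⟦n⟧)) : Z0 X Y := fun f => by
  apply (shiftFunctor C n).map_injective
  rw [h ((shiftFunctor C n).map f), Functor.map_zero]

lemma mem_shiftSet_of_iso {S : Set C} {k : ℤ} {X Y : C} (e : X ≅ Y) (hX : X ∈ shiftSet S k) :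
    Y ∈ shiftSet S k := by
  obtain ⟨A, hA, ⟨e'⟩⟩ := hX
  exact ⟨A, hA, ⟨e.symm ≪≫ e'⟩⟩

lemma shift_mem_shiftSet {S : Set C} {A : C} (hA : A ∈ S) (k : ℤ) : A⟦k⟧ ∈ shiftSet S k :=
  ⟨A, hA, ⟨Iso.refl _⟩⟩

lemma mem_shiftSet_zero {S : Set C} {A : C} (hA : A ∈ S) : A ∈ shiftSet S 0 :=
  ⟨A, hA, ⟨((shiftFunctorZero C ℤ).app A).symm⟩⟩

lemma mem_shiftSet_shift {S : Set C} {X : C} {a : ℤ} (hX : X ∈ shiftSet S a) (b : ℤ) :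
    X⟦b⟧ ∈ shiftSet S (a + b) := by
  obtain ⟨A, hA, ⟨e⟩⟩ := hX
  exact ⟨A, hA, ⟨(shiftFunctor C b).mapIso e ≪≫ ((shiftFunctorAdd C a b).app A).symm⟩⟩

lemma shiftSet_shiftSet (S : Set C) (a b : ℤ) :
    shiftSet (shiftSet S a) b = shiftSet S (a + b) := by
  ext X
  constructor
  · rintro ⟨A, hA, ⟨e⟩⟩
    exact mem_shiftSet_of_iso e.symm (mem_shiftSet_shift hA b)
  · rintro ⟨A, hA, ⟨e⟩⟩
    exact ⟨A⟦a⟧, shift_mem_shiftSet hA a, ⟨e ≪≫ (shiftFunctorAdd C a b).app A⟩⟩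

lemma shiftSet_mono {S S' : Set C} (h : S ⊆ S') (k : ℤ) : shiftSet S k ⊆ shiftSet S' k := by
  rintro X ⟨A, hA, he⟩
  exact ⟨A, h hA, he⟩

lemma dist_conj {X X' Y Y' Z Z' : C} (eX : X ≅ X') (eY : Y ≅ Y') (eZ : Z ≅ Z')
    {f : X ⟶ Y} {g : Y ⟶ Z} {h : Z ⟶ X⟦(1 : ℤ)⟧}
    (hT : Triangle.mk f g h ∈ distTriang C) :
    Triangle.mk (eX.inv ≫ f ≫ eY.hom) (eY.inv ≫ g ≫ eZ.hom)
      (eZ.inv ≫ h ≫ (shiftFunctor C (1 : ℤ)).map eX.hom) ∈ distTriang C := by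
  refine isomorphic_distinguished _ hT _ ?_
  refine Triangle.isoMk _ _ eX.symm eY.symm eZ.symm ?_ ?_ ?_ <;> dsimp [Triangle.mk] <;>
    simp [← Functor.map_comp]

lemma eqToHom_dist {X X' Y Y' Z Z' : C} (hX : X = X') (hY : Y = Y') (hZ : Z = Z')
    {f : X' ⟶ Y'} {g : Y' ⟶ Z'} {h : Z' ⟶ X'⟦(1 : ℤ)⟧}
    (hT : Triangle.mk f g h ∈ distTriang C) :
    Triangle.mk (eqToHom hX ≫ f ≫ eqToHom hY.symm) (eqToHom hY ≫ g ≫ eqToHom hZ.symm)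
      (eqToHom hZ ≫ h ≫ eqToHom (show X'⟦(1 : ℤ)⟧ = X⟦(1 : ℤ)⟧ by rw [hX]))
      ∈ distTriang C := by
  subst hX hY hZ
  simpa using hT

lemma Z0_obj₂_src {T : Triangle C} (hT : T ∈ distTriang C) {Q : C}
    (h₁ : Z0 T.obj₁ Q) (h₃ : Z0 T.obj₃ Q) : Z0 T.obj₂ Q := fun f => by
  obtain ⟨g, hg⟩ := Triangle.yoneda_exact₂ T hT f (h₁ _)
  rw [hg, h₃ g, comp_zero]

lemma Z0_obj₂_tgt {T : Triangle C} (hT : T ∈ distTriang C) {Q : C}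
    (h₁ : Z0 Q T.obj₁) (h₃ : Z0 Q T.obj₃) : Z0 Q T.obj₂ := fun f => by
  obtain ⟨g, hg⟩ := Triangle.coyoneda_exact₂ T hT f (h₃ _)
  rw [hg, h₁ g, zero_comp]

lemma isZero_unshift {X : C} (n : ℤ) (h : IsZero (X⟦n⟧)) : IsZero X := by
  rw [IsZero.iff_id_eq_zero] at h ⊢
  apply (shiftFunctor C n).map_injective
  rw [CategoryTheory.Functor.map_id, Functor.map_zero]
  exact h

lemma isZero₃_of_mor₂_zero {T : Triangle C} (hT : T ∈ distTriang C) (h2 : T.mor₂ = 0)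
    (horth : Z0 (T.obj₁⟦(1 : ℤ)⟧) T.obj₃) : IsZero T.obj₃ := by
  rw [IsZero.iff_id_eq_zero]
  obtain ⟨g, hg⟩ := Triangle.yoneda_exact₃ T hT (𝟙 _) (by rw [h2, zero_comp])
  rw [hg, horth g, comp_zero]

lemma isZero₁_of_mor₁_zero {T : Triangle C} (hT : T ∈ distTriang C) (h1 : T.mor₁ = 0)
    (horth : Z0 (T.obj₁⟦(1 : ℤ)⟧) T.obj₃) : IsZero T.obj₁ := by
  apply isZero_unshift (1 : ℤ)
  rw [IsZero.iff_id_eq_zero]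
  obtain ⟨g, hg⟩ := Triangle.coyoneda_exact₁ T hT (𝟙 _)
    (by rw [Category.id_comp, h1, Functor.map_zero])
  rw [hg, horth g, zero_comp]


namespace HNFiltration

variable {H' : Set C}

lemma z0_src {E Q : C} (𝒻 : HNFiltration H' E) (h : ∀ i, Z0 (𝒻.factor i) Q) : Z0 E Q := by
  have key : ∀ i : Fin (𝒻.m + 1), Z0 (𝒻.obj i) Q := by
    intro i
    induction i using Fin.induction with
    | zero => exact Z0.of_src_isZero 𝒻.isZero_zero
    | succ j hj =>
      intro f
      obtain ⟨g, hg⟩ := Triangle.yoneda_exact₂ _ (𝒻.distinguished j) f (hj _)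
      rw [hg, h j g]; exact comp_zero
  rw [← 𝒻.obj_last]
  exact key _

lemma z0_tgt {E Q : C} (𝒻 : HNFiltration H' E) (h : ∀ i, Z0 Q (𝒻.factor i)) : Z0 Q E := by
  have key : ∀ i : Fin (𝒻.m + 1), Z0 Q (𝒻.obj i) := by
    intro i
    induction i using Fin.induction with
    | zero => exact Z0.of_tgt_isZero 𝒻.isZero_zero
    | succ j hj =>
      intro f
      obtain ⟨g, hg⟩ := Triangle.coyoneda_exact₂ _ (𝒻.distinguished j) f (h j _)
      rw [hg, hj g]; exact zero_comp
  rw [← 𝒻.obj_last]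
  exact key _

/-- The empty filtration of a zero object. -/
noncomputable def ofIsZero (H' : Set C) {E : C} (hE : IsZero E) : HNFiltration H' E where
  m := 0
  deg := Fin.elim0
  deg_strictAnti := fun i => i.elim0
  obj := fun _ => E
  isZero_zero := hE
  obj_last := rfl
  factor := Fin.elim0
  factor_mem := fun i => i.elim0
  ι := fun i => i.elim0
  π := fun i => i.elim0
  δ := fun i => i.elim0
  distinguished := fun i => i.elim0

/-- Reinterpret a filtration with new degrees/sets. -/
noncomputable def changeDeg {H'' : Set C} {E : C} (𝒻 : HNFiltration H' E) (d : Fin 𝒻.m → ℤ)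
    (hanti : ∀ i j : Fin 𝒻.m, i < j → d j < d i)
    (hmem : ∀ i, 𝒻.factor i ∈ shiftSet H'' (d i)) : HNFiltration H'' E :=
  { 𝒻 with deg := d, deg_strictAnti := hanti, factor_mem := hmem }

/-- Shift a filtration by `n`. -/
noncomputable def shiftF {E : C} (𝒻 : HNFiltration H' E) (n : ℤ) : HNFiltration H' (E⟦n⟧) where
  m := 𝒻.m
  deg := fun i => 𝒻.deg i + n
  deg_strictAnti := fun i j hij => by
    have := 𝒻.deg_strictAnti i j hij
    omega
  obj := fun i => (𝒻.obj i)⟦n⟧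
  isZero_zero := (shiftFunctor C n).map_isZero 𝒻.isZero_zero
  obj_last := by rw [𝒻.obj_last]
  factor := fun i => (𝒻.factor i)⟦n⟧
  factor_mem := fun i => mem_shiftSet_shift (𝒻.factor_mem i) n
  ι := fun i => n.negOnePow • ((𝒻.ι i)⟦n⟧')
  π := fun i => n.negOnePow • ((𝒻.π i)⟦n⟧')
  δ := fun i => n.negOnePow • ((𝒻.δ i)⟦n⟧' ≫ (shiftFunctorComm C 1 n).hom.app (𝒻.obj i.castSucc))
  distinguished := fun i => Triangle.shift_distinguished _ (𝒻.distinguished i) n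

/-- Truncation: the prefix tower of length `k`. -/
noncomputable def trunc {E : C} (𝒻 : HNFiltration H' E) (k : ℕ) (hk : k + 1 = 𝒻.m) :
    HNFiltration H' (𝒻.obj ⟨k, by omega⟩) where
  m := k
  deg := fun i => 𝒻.deg ⟨i.val, by omega⟩
  deg_strictAnti := fun i j hij => 𝒻.deg_strictAnti _ _ (by
    rw [Fin.mk_lt_mk]; rw [Fin.lt_def] at hij; omega)
  obj := fun i => 𝒻.obj ⟨i.val, by omega⟩
  isZero_zero := 𝒻.isZero_zero
  obj_last := rfl
  factor := fun i => 𝒻.factor ⟨i.val, by omega⟩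
  factor_mem := fun i => 𝒻.factor_mem _
  ι := fun i => 𝒻.ι ⟨i.val, by omega⟩
  π := fun i => 𝒻.π ⟨i.val, by omega⟩
  δ := fun i => 𝒻.δ ⟨i.val, by omega⟩
  distinguished := fun i => 𝒻.distinguished ⟨i.val, by omega⟩

/-- Extend a filtration by one step at the end. -/
noncomputable def snoc {M E P : C} (𝒻 : HNFiltration H' M) (d : ℤ)
    (hd : ∀ i, d < 𝒻.deg i) (hP : P ∈ shiftSet H' d)
    (g : M ⟶ E) (p : E ⟶ P) (δ₀ : P ⟶ M⟦(1 : ℤ)⟧)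
    (hT : Triangle.mk g p δ₀ ∈ distTriang C) : HNFiltration H' E where
  m := 𝒻.m + 1
  deg := Fin.snoc 𝒻.deg d
  deg_strictAnti := by
    intro i j hij
    induction j using Fin.lastCases with
    | last =>
      obtain ⟨i', rfl⟩ := Fin.exists_castSucc_eq.mpr hij.ne
      rw [Fin.snoc_last, Fin.snoc_castSucc]
      exact hd i'
    | cast j' =>
      have hine : i ≠ Fin.last _ := by
        rintro rfl
        exact absurd (hij.trans (Fin.castSucc_lt_last j')) (lt_irrefl _)
      obtain ⟨i', rfl⟩ := Fin.exists_castSucc_eq.mpr hine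
      rw [Fin.snoc_castSucc, Fin.snoc_castSucc]
      exact 𝒻.deg_strictAnti i' j' (by rwa [Fin.castSucc_lt_castSucc_iff] at hij)
  obj := (Fin.snoc 𝒻.obj E : Fin (𝒻.m + 1 + 1) → C)
  isZero_zero := by
    have h0 : (0 : Fin (𝒻.m + 1 + 1)) = Fin.castSucc 0 := rfl
    rw [h0, Fin.snoc_castSucc]
    exact 𝒻.isZero_zero
  obj_last := Fin.snoc_last _ _
  factor := (Fin.snoc 𝒻.factor P : Fin (𝒻.m + 1) → C)
  factor_mem := by
    intro i
    induction i using Fin.lastCases with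
    | last =>
      show (Fin.snoc 𝒻.factor P : Fin (𝒻.m + 1) → C) _ ∈
        shiftSet H' ((Fin.snoc 𝒻.deg d : Fin (𝒻.m + 1) → ℤ) _)
      rw [Fin.snoc_last, Fin.snoc_last]
      exact hP
    | cast j =>
      show (Fin.snoc 𝒻.factor P : Fin (𝒻.m + 1) → C) _ ∈
        shiftSet H' ((Fin.snoc 𝒻.deg d : Fin (𝒻.m + 1) → ℤ) _)
      rw [Fin.snoc_castSucc, Fin.snoc_castSucc]
      exact 𝒻.factor_mem j
  ι := fun i => Fin.lastCases
    (motive := fun i => (Fin.snoc 𝒻.obj E : Fin (𝒻.m + 1 + 1) → C) i.castSucc ⟶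
      (Fin.snoc 𝒻.obj E : Fin (𝒻.m + 1 + 1) → C) i.succ)
    (eqToHom (show (Fin.snoc 𝒻.obj E : Fin (𝒻.m + 1 + 1) → C) (Fin.last 𝒻.m).castSucc = M by
        rw [Fin.snoc_castSucc, 𝒻.obj_last]) ≫ g ≫
      eqToHom (show E = (Fin.snoc 𝒻.obj E : Fin (𝒻.m + 1 + 1) → C) (Fin.last 𝒻.m).succ by
        rw [Fin.succ_last, Fin.snoc_last]))
    (fun j => eqToHom (show (Fin.snoc 𝒻.obj E : Fin (𝒻.m + 1 + 1) → C) j.castSucc.castSucc =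
        𝒻.obj j.castSucc by rw [Fin.snoc_castSucc]) ≫ 𝒻.ι j ≫
      eqToHom (show 𝒻.obj j.succ = (Fin.snoc 𝒻.obj E : Fin (𝒻.m + 1 + 1) → C) j.castSucc.succ by
        rw [Fin.succ_castSucc, Fin.snoc_castSucc])) i
  π := fun i => Fin.lastCases
    (motive := fun i => (Fin.snoc 𝒻.obj E : Fin (𝒻.m + 1 + 1) → C) i.succ ⟶
      (Fin.snoc 𝒻.factor P : Fin (𝒻.m + 1) → C) i)
    (eqToHom (show (Fin.snoc 𝒻.obj E : Fin (𝒻.m + 1 + 1) → C) (Fin.last 𝒻.m).succ = E by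
        rw [Fin.succ_last, Fin.snoc_last]) ≫ p ≫
      eqToHom (show P = (Fin.snoc 𝒻.factor P : Fin (𝒻.m + 1) → C) (Fin.last 𝒻.m) by
        rw [Fin.snoc_last]))
    (fun j => eqToHom (show (Fin.snoc 𝒻.obj E : Fin (𝒻.m + 1 + 1) → C) j.castSucc.succ =
        𝒻.obj j.succ by rw [Fin.succ_castSucc, Fin.snoc_castSucc]) ≫ 𝒻.π j ≫
      eqToHom (show 𝒻.factor j = (Fin.snoc 𝒻.factor P : Fin (𝒻.m + 1) → C) j.castSucc by
        rw [Fin.snoc_castSucc])) i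
  δ := fun i => Fin.lastCases
    (motive := fun i => (Fin.snoc 𝒻.factor P : Fin (𝒻.m + 1) → C) i ⟶
      ((Fin.snoc 𝒻.obj E : Fin (𝒻.m + 1 + 1) → C) i.castSucc)⟦(1 : ℤ)⟧)
    (eqToHom (show (Fin.snoc 𝒻.factor P : Fin (𝒻.m + 1) → C) (Fin.last 𝒻.m) = P by
        rw [Fin.snoc_last]) ≫ δ₀ ≫
      eqToHom (show M⟦(1 : ℤ)⟧ =
          ((Fin.snoc 𝒻.obj E : Fin (𝒻.m + 1 + 1) → C) (Fin.last 𝒻.m).castSucc)⟦(1 : ℤ)⟧ by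
        rw [Fin.snoc_castSucc, 𝒻.obj_last]))
    (fun j => eqToHom (show (Fin.snoc 𝒻.factor P : Fin (𝒻.m + 1) → C) j.castSucc = 𝒻.factor j
        by rw [Fin.snoc_castSucc]) ≫ 𝒻.δ j ≫
      eqToHom (show (𝒻.obj j.castSucc)⟦(1 : ℤ)⟧ =
          ((Fin.snoc 𝒻.obj E : Fin (𝒻.m + 1 + 1) → C) j.castSucc.castSucc)⟦(1 : ℤ)⟧ by
        rw [Fin.snoc_castSucc])) i
  distinguished := by
    intro i
    induction i using Fin.lastCases with
    | last =>
      simp only [Fin.lastCases_last]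
      exact eqToHom_dist _ _ _ hT
    | cast j =>
      simp only [Fin.lastCases_castSucc]
      exact eqToHom_dist _ _ _ (𝒻.distinguished j)

/-- Transport a filtration along an isomorphism of the total object. -/
lemma ofIso {M E : C} (𝒻 : HNFiltration H' M) (e : M ≅ E) :
    ∃ 𝒢 : HNFiltration H' E, 𝒢.m = 𝒻.m ∧ ∀ i : Fin 𝒢.m, ∃ j : Fin 𝒻.m, 𝒢.deg i = 𝒻.deg j := by
  obtain h0 | ⟨k, hk⟩ : 𝒻.m = 0 ∨ ∃ k, k + 1 = 𝒻.m := by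
    rcases hm : 𝒻.m with _ | k
    · exact Or.inl rfl
    · exact Or.inr ⟨k, rfl⟩
  · have hEz : IsZero E := by
      have h2 : Fin.last 𝒻.m = 0 := by ext; simp [h0]
      have h1 := 𝒻.isZero_zero
      rw [← h2, 𝒻.obj_last] at h1
      exact h1.of_iso e.symm
    refine ⟨ofIsZero H' hEz, h0.symm, fun i => i.elim0⟩
  · have hkm : k < 𝒻.m := by omega
    have hobj : 𝒻.obj ((⟨k, hkm⟩ : Fin 𝒻.m).succ) = M := by
      have h2 : ((⟨k, hkm⟩ : Fin 𝒻.m).succ) = Fin.last 𝒻.m := by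
        ext; simp [Fin.last]; omega
      rw [h2, 𝒻.obj_last]
    have hT2 := dist_conj (Iso.refl (𝒻.obj (Fin.castSucc ⟨k, hkm⟩)))
      (eqToIso hobj ≪≫ e) (Iso.refl (𝒻.factor ⟨k, hkm⟩)) (𝒻.distinguished ⟨k, hkm⟩)
    have hd' : ∀ i : Fin ((𝒻.trunc k hk).m), 𝒻.deg ⟨k, hkm⟩ < (𝒻.trunc k hk).deg i := by
      intro i
      have hi : i.val < k := i.isLt
      exact 𝒻.deg_strictAnti ⟨i.val, by omega⟩ ⟨k, hkm⟩ (by rw [Fin.mk_lt_mk]; exact hi)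
    refine ⟨(𝒻.trunc k hk).snoc (𝒻.deg ⟨k, hkm⟩) hd' (𝒻.factor_mem ⟨k, hkm⟩) _ _ _ hT2, hk, ?_⟩
    have key : ∀ i' : Fin ((𝒻.trunc k hk).m + 1), ∃ j : Fin 𝒻.m,
        (Fin.snoc (𝒻.trunc k hk).deg (𝒻.deg ⟨k, hkm⟩) : Fin ((𝒻.trunc k hk).m + 1) → ℤ) i'
          = 𝒻.deg j := by
      intro i'
      induction i' using Fin.lastCases with
      | last => exact ⟨⟨k, hkm⟩, by rw [Fin.snoc_last]⟩
      | cast j => exact ⟨⟨j.val, by have hj : j.val < k := j.isLt; omega⟩,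
          by rw [Fin.snoc_castSucc]; rfl⟩
    exact fun i => key i

end HNFiltration


section Purity

variable {H : Set C}

/-- `E` has no pieces in degrees `≤ e`. -/
def VanLow (H : Set C) (E : C) (e : ℤ) : Prop :=
  ∀ k : ℤ, k ≤ e → ∀ Q ∈ shiftSet H k, Z0 E Q

/-- `E` has no pieces in degrees `≥ e`. -/
def VanHigh (H : Set C) (E : C) (e : ℤ) : Prop :=
  ∀ k : ℤ, e ≤ k → ∀ Q ∈ shiftSet H k, Z0 Q E

/-- Rebuilding the tower after dropping a zero bottom object. -/
lemma HNFiltration.exists_prefix {H' : Set C} {E : C} (𝒻 : HNFiltration H' E)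
    (h1 : 1 < 𝒻.m + 1) (hz : IsZero (𝒻.obj ⟨1, h1⟩)) (t : ℕ) (ht : 1 + t < 𝒻.m + 1) :
    ∃ 𝒢 : HNFiltration H' (𝒻.obj ⟨1 + t, ht⟩), 𝒢.m = t ∧
      ∀ i : Fin 𝒢.m, ∃ r : Fin 𝒻.m, 1 ≤ r.val ∧ r.val < 1 + t ∧ 𝒢.deg i = 𝒻.deg r := by
  induction t with
  | zero => exact ⟨HNFiltration.ofIsZero H' hz, rfl, fun i => i.elim0⟩
  | succ t iht =>
    obtain ⟨𝒢, hm, hdeg⟩ := iht (by omega)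
    have h1t : 1 + t < 𝒻.m := by omega
    have hd : ∀ i : Fin 𝒢.m, 𝒻.deg ⟨1 + t, h1t⟩ < 𝒢.deg i := by
      intro i
      obtain ⟨r, hr1, hr2, hr3⟩ := hdeg i
      rw [hr3]
      exact 𝒻.deg_strictAnti r ⟨1 + t, h1t⟩ (by rw [Fin.lt_def]; exact hr2)
    refine ⟨𝒢.snoc (𝒻.deg ⟨1 + t, h1t⟩) hd (𝒻.factor_mem ⟨1 + t, h1t⟩)
      (𝒻.ι ⟨1 + t, h1t⟩) (𝒻.π ⟨1 + t, h1t⟩) (𝒻.δ ⟨1 + t, h1t⟩)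
      (𝒻.distinguished ⟨1 + t, h1t⟩), by simpa [HNFiltration.snoc] using hm, ?_⟩
    have key : ∀ i : Fin (𝒢.m + 1), ∃ r : Fin 𝒻.m, 1 ≤ r.val ∧ r.val < 1 + (t + 1) ∧
        (Fin.snoc 𝒢.deg (𝒻.deg ⟨1 + t, h1t⟩) : Fin (𝒢.m + 1) → ℤ) i = 𝒻.deg r := by
      intro i
      induction i using Fin.lastCases with
      | last =>
        refine ⟨⟨1 + t, h1t⟩, by show (1 : ℕ) ≤ 1 + t; omega,
          by show 1 + t < 1 + (t + 1); omega, ?_⟩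
        rw [Fin.snoc_last]
      | cast j =>
        obtain ⟨r, hr1, hr2, hr3⟩ := hdeg j
        refine ⟨r, hr1, by omega, ?_⟩
        rw [Fin.snoc_castSucc]
        exact hr3
    exact fun i => key i

/-- Purification of a filtration: if `E` has no pieces outside the window `(lo, hi)`,
then it admits a filtration with all degrees in this window. -/
lemma exists_filt_window (hH : IsHeart H) : ∀ (n : ℕ) {E : C} (𝒻 : HNFiltration H E),
    𝒻.m ≤ n → ∀ (lo hi : ℤ), VanLow H E lo → VanHigh H E hi →
    ∃ 𝒢 : HNFiltration H E, ∀ i, lo < 𝒢.deg i ∧ 𝒢.deg i < hi := by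
  intro n
  induction n with
  | zero =>
    intro E 𝒻 hm lo hi _ _
    exact ⟨𝒻, fun i => absurd i.isLt (by omega)⟩
  | succ n ih =>
    intro E 𝒻 hm lo hi hlow hhigh
    by_cases h0 : 𝒻.m = 0
    · exact ⟨𝒻, fun i => absurd i.isLt (by omega)⟩
    obtain ⟨k, hk⟩ : ∃ k, k + 1 = 𝒻.m := ⟨𝒻.m - 1, by omega⟩
    have hkm : k < 𝒻.m := by omega
    have h0m : 0 < 𝒻.m := by omega
    by_cases hbad : 𝒻.deg ⟨k, hkm⟩ ≤ lo
    · -- the bottom piece vanishes; drop it and recurse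
      have hlastobj : 𝒻.obj ((⟨k, hkm⟩ : Fin 𝒻.m).succ) = E := by
        rw [show ((⟨k, hkm⟩ : Fin 𝒻.m).succ) = Fin.last 𝒻.m from by
          ext; simp [Fin.last]; omega, 𝒻.obj_last]
      have hz0 : Z0 (𝒻.obj ((⟨k, hkm⟩ : Fin 𝒻.m).succ)) (𝒻.factor ⟨k, hkm⟩) :=
        (hlow _ hbad _ (𝒻.factor_mem _)).conj (eqToIso hlastobj) (Iso.refl _)
      have hzero : IsZero (𝒻.factor ⟨k, hkm⟩) := by
        refine isZero₃_of_mor₂_zero (𝒻.distinguished ⟨k, hkm⟩) (hz0 _) ?_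
        refine ((𝒻.trunc k hk).shiftF 1).z0_src ?_
        intro i
        have hik : i.val < k := i.isLt
        refine hH.hom_orth (𝒻.deg ⟨i.val, by omega⟩ + 1) (𝒻.deg ⟨k, hkm⟩)
          ?_ _ _ (mem_shiftSet_shift (𝒻.factor_mem ⟨i.val, by omega⟩) 1) (𝒻.factor_mem _)
        have := 𝒻.deg_strictAnti ⟨i.val, by omega⟩ ⟨k, hkm⟩ (by rw [Fin.mk_lt_mk]; exact hik)
        omega
      have hiso : IsIso (𝒻.ι ⟨k, hkm⟩) :=
        (Triangle.isZero₃_iff_isIso₁ _ (𝒻.distinguished ⟨k, hkm⟩)).mp hzero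
      obtain ⟨𝒢₁, hm1, _⟩ := (𝒻.trunc k hk).ofIso (asIso (𝒻.ι ⟨k, hkm⟩) ≪≫ eqToIso hlastobj)
      have hm1' : 𝒢₁.m = k := hm1
      exact ih 𝒢₁ (by omega) lo hi hlow hhigh
    · by_cases htop : hi ≤ 𝒻.deg ⟨0, h0m⟩
      · -- the top piece vanishes; drop it and recurse
        have e1 : IsIso (𝒻.π ⟨0, h0m⟩) := by
          refine (Triangle.isZero₁_iff_isIso₂ _ (𝒻.distinguished ⟨0, h0m⟩)).mp ?_
          exact 𝒻.isZero_zero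
        have hmem1 : 𝒻.obj ((⟨0, h0m⟩ : Fin 𝒻.m).succ) ∈ shiftSet H (𝒻.deg ⟨0, h0m⟩) :=
          mem_shiftSet_of_iso (asIso (𝒻.π ⟨0, h0m⟩)).symm (𝒻.factor_mem ⟨0, h0m⟩)
        have hchain : ∀ d v : ℕ, ∀ (hvd : v + d = 𝒻.m) (_ : 1 ≤ v),
            Z0 (𝒻.obj ((⟨0, h0m⟩ : Fin 𝒻.m).succ)) (𝒻.obj ⟨v, by omega⟩) := by
          intro d
          induction d with
          | zero =>
            intro v hv hv1
            have hveq : v = 𝒻.m := by omega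
            subst hveq
            refine (hhigh _ htop _ hmem1).conj (Iso.refl _) (eqToIso ?_)
            exact 𝒻.obj_last
          | succ d ihd =>
            intro v hv hv1
            intro f
            have hvm : v < 𝒻.m := by omega
            have hnext : (f ≫ 𝒻.ι ⟨v, hvm⟩) = 0 := ihd (v + 1) (by omega) (by omega) _
            obtain ⟨f₂, hf₂⟩ := Triangle.coyoneda_exact₂ _
              (inv_rot_of_distTriang _ (𝒻.distinguished ⟨v, hvm⟩)) f hnext
            have hz : Z0 (𝒻.obj ((⟨0, h0m⟩ : Fin 𝒻.m).succ)) ((𝒻.factor ⟨v, hvm⟩)⟦(-1 : ℤ)⟧) := by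
              refine hH.hom_orth (𝒻.deg ⟨0, h0m⟩) (𝒻.deg ⟨v, hvm⟩ + (-1)) ?_ _ _ hmem1
                (mem_shiftSet_shift (𝒻.factor_mem ⟨v, hvm⟩) (-1))
              have : v = 0 ∨ 0 < v := by omega
              rcases this with h | h
              · omega
              · have := 𝒻.deg_strictAnti ⟨0, h0m⟩ ⟨v, hvm⟩ (by rw [Fin.mk_lt_mk]; omega)
                omega
            rw [hf₂, hz f₂]; exact zero_comp
        have hz1 : IsZero (𝒻.obj ⟨1, by omega⟩) := by
          rw [IsZero.iff_id_eq_zero]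
          exact hchain (𝒻.m - 1) 1 (by omega) le_rfl (𝟙 _)
        obtain ⟨𝒢₂, hm2, _⟩ := 𝒻.exists_prefix (by omega) hz1 k (by omega)
        have hlast : 𝒻.obj ⟨1 + k, by omega⟩ = E := by
          rw [show (⟨1 + k, by omega⟩ : Fin (𝒻.m + 1)) = Fin.last 𝒻.m from by
            ext; simp [Fin.last]; omega, 𝒻.obj_last]
        obtain ⟨𝒢₃, hm3, _⟩ := 𝒢₂.ofIso (eqToIso hlast)
        exact ih 𝒢₃ (by omega) lo hi hlow hhigh
      · -- all degrees are inside the window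
        refine ⟨𝒻, fun i => ⟨?_, ?_⟩⟩
        · rcases eq_or_lt_of_le (show i.val ≤ k by have := i.isLt; omega) with h | h
          · have : i = ⟨k, hkm⟩ := by ext; exact h
            rw [this]; omega
          · have := 𝒻.deg_strictAnti i ⟨k, hkm⟩ (by rw [Fin.lt_def]; exact h)
            omega
        · rcases Nat.eq_zero_or_pos i.val with h | h
          · have : i = ⟨0, h0m⟩ := by ext; exact h
            rw [this]; omega
          · have := 𝒻.deg_strictAnti ⟨0, h0m⟩ i (by rw [Fin.lt_def]; exact h)
            omega

end Purity


section Tilt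

open ZeroObject

variable {H T F : Set C}

lemma horth (hH : IsHeart H) {k₁ k₂ : ℤ} (h : k₂ < k₁) {A B : C}
    (hA : A ∈ shiftSet H k₁) (hB : B ∈ shiftSet H k₂) : Z0 A B :=
  hH.hom_orth k₁ k₂ h A B hA hB

lemma torth (htp : IsTorsionPair H T F) {a : ℤ} {A B : C}
    (hA : A ∈ shiftSet T a) (hB : B ∈ shiftSet F a) : Z0 A B := by
  obtain ⟨A₀, hA₀, ⟨eA⟩⟩ := hA
  obtain ⟨B₀, hB₀, ⟨eB⟩⟩ := hB
  exact Z0.conj eA eB (Z0.shift (htp.hom_zero A₀ hA₀ B₀ hB₀) a)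

lemma zero_mem_F (hH : IsHeart H) (htp : IsTorsionPair H T F) {W : C} (hW : W ∈ T)
    {Z : C} (hZ : IsZero Z) : Z ∈ F := by
  obtain ⟨X, Y, f, g, h, hX, hY, hT⟩ := htp.decomp W (htp.subsetT hW)
  have hg : g = 0 := htp.hom_zero W hW Y hY g
  have hYz : IsZero Y := by
    refine isZero₃_of_mor₂_zero hT hg ?_
    exact horth hH (by omega : (0 : ℤ) < 1)
      (shift_mem_shiftSet (htp.subsetT hX) 1) (mem_shiftSet_zero (htp.subsetF hY))
  exact htp.isoClosedF (hYz.iso hZ) hY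

lemma zero_mem_T (hH : IsHeart H) (htp : IsTorsionPair H T F) {W : C} (hW : W ∈ F)
    {Z : C} (hZ : IsZero Z) : Z ∈ T := by
  obtain ⟨X, Y, f, g, h, hX, hY, hT⟩ := htp.decomp W (htp.subsetF hW)
  have hf : f = 0 := htp.hom_zero X hX W hW f
  have hXz : IsZero X := by
    refine isZero₁_of_mor₁_zero hT hf ?_
    exact horth hH (by omega : (0 : ℤ) < 1)
      (shift_mem_shiftSet (htp.subsetT hX) 1) (mem_shiftSet_zero (htp.subsetF hY))
  exact htp.isoClosedT (hXz.iso hZ) hX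

lemma crit_T (hH : IsHeart H) (htp : IsTorsionPair H T F) {G : C} (hG : G ∈ H)
    (hz : ∀ Q ∈ F, Z0 G Q) : G ∈ T := by
  obtain ⟨X, Y, f, g, h, hX, hY, hT⟩ := htp.decomp G hG
  have hYz : IsZero Y := by
    refine isZero₃_of_mor₂_zero hT (hz Y hY g) ?_
    exact horth hH (by omega : (0 : ℤ) < 1)
      (shift_mem_shiftSet (htp.subsetT hX) 1) (mem_shiftSet_zero (htp.subsetF hY))
  have hiso : IsIso ((Triangle.mk f g h).mor₁) := (Triangle.isZero₃_iff_isIso₁ _ hT).mp hYz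
  exact htp.isoClosedT (@asIso _ _ _ _ f hiso) hX

lemma crit_F (hH : IsHeart H) (htp : IsTorsionPair H T F) {G : C} (hG : G ∈ H)
    (hz : ∀ Q ∈ T, Z0 Q G) : G ∈ F := by
  obtain ⟨X, Y, f, g, h, hX, hY, hT⟩ := htp.decomp G hG
  have hXz : IsZero X := by
    refine isZero₁_of_mor₁_zero hT (hz X hX f) ?_
    exact horth hH (by omega : (0 : ℤ) < 1)
      (shift_mem_shiftSet (htp.subsetT hX) 1) (mem_shiftSet_zero (htp.subsetF hY))
  have hiso : IsIso ((Triangle.mk f g h).mor₂) := (Triangle.isZero₁_iff_isIso₂ _ hT).mp hXz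
  exact htp.isoClosedF (@asIso _ _ _ _ g hiso).symm hY

lemma crit_T_shift (hH : IsHeart H) (htp : IsTorsionPair H T F) {a : ℤ} {G : C}
    (hG : G ∈ shiftSet H a) (hz : ∀ Q ∈ shiftSet F a, Z0 G Q) : G ∈ shiftSet T a := by
  obtain ⟨B, hB, ⟨e⟩⟩ := hG
  refine ⟨B, ?_, ⟨e⟩⟩
  refine crit_T hH htp hB (fun Q hQ => ?_)
  exact Z0.unshift a (((hz (Q⟦a⟧) (shift_mem_shiftSet hQ a))).conj e.symm (Iso.refl _))

lemma crit_F_shift (hH : IsHeart H) (htp : IsTorsionPair H T F) {a : ℤ} {G : C}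
    (hG : G ∈ shiftSet H a) (hz : ∀ Q ∈ shiftSet T a, Z0 Q G) : G ∈ shiftSet F a := by
  obtain ⟨B, hB, ⟨e⟩⟩ := hG
  refine ⟨B, ?_, ⟨e⟩⟩
  refine crit_F hH htp hB (fun Q hQ => ?_)
  exact Z0.unshift a (((hz (Q⟦a⟧) (shift_mem_shiftSet hQ a))).conj (Iso.refl _) e.symm)

lemma T_subset_S (hH : IsHeart H) (htp : IsTorsionPair H T F) : T ⊆ forwardTilt T F := by
  intro Z hZ
  have h0F : (0 : C) ∈ shiftSet F 1 :=
    ⟨0, zero_mem_F hH htp hZ (isZero_zero C),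
      ⟨(isZero_zero C).iso ((shiftFunctor C (1 : ℤ)).map_isZero (isZero_zero C))⟩⟩
  exact ⟨0, Z, 0, 𝟙 Z, 0, h0F, hZ, contractible_distinguished₁ Z⟩

lemma Fshift_subset_S (hH : IsHeart H) (htp : IsTorsionPair H T F) :
    shiftSet F 1 ⊆ forwardTilt T F := by
  intro X hX
  obtain ⟨W, hW, -⟩ := id hX
  have h0T : (0 : C) ∈ T := zero_mem_T hH htp hW (isZero_zero C)
  exact ⟨X, 0, 𝟙 X, 0, 0, hX, h0T, contractible_distinguished X⟩

lemma zero_mem_S (hH : IsHeart H) (htp : IsTorsionPair H T F) {W : C} (hW : W ∈ F)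
    {Z : C} (hZ : IsZero Z) : Z ∈ forwardTilt T F := by
  have h0T : (0 : C) ∈ T := zero_mem_T hH htp hW (isZero_zero C)
  have h0F : (0 : C) ∈ F := zero_mem_F hH htp h0T (isZero_zero C)
  refine Fshift_subset_S hH htp ⟨0, h0F, ⟨hZ.iso ((shiftFunctor C (1 : ℤ)).map_isZero (isZero_zero C))⟩⟩

lemma S_isoClosed {X Y : C} (e : X ≅ Y) (hX : X ∈ forwardTilt T F) : Y ∈ forwardTilt T F := by
  obtain ⟨X', Y', f, g, h, hX', hY', hT⟩ := hX
  exact ⟨X', Y', (Iso.refl X').inv ≫ f ≫ e.hom, e.inv ≫ g ≫ (Iso.refl Y').hom,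
    (Iso.refl Y').inv ≫ h ≫ (shiftFunctor C (1 : ℤ)).map (Iso.refl X').hom,
    hX', hY', dist_conj (Iso.refl X') e (Iso.refl Y') hT⟩

/-- The key membership criterion for the (shifted) forward tilt,
in terms of Hom-vanishing. -/
lemma mem_shiftSet_S_of_van (hH : IsHeart H) (htp : IsTorsionPair H T F) (a : ℤ) {V : C}
    (hFne : ∃ W, W ∈ F)
    (hlow : VanLow H V (a - 1)) (hlowF : ∀ Q ∈ shiftSet F a, Z0 V Q)
    (hhigh : VanHigh H V (a + 2)) (hhighT : ∀ Q ∈ shiftSet T (a + 1), Z0 Q V) :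
    V ∈ shiftSet (forwardTilt T F) a := by
  obtain ⟨W₀, hW₀⟩ := hFne
  by_cases hz : IsZero V
  · exact ⟨0, zero_mem_S hH htp hW₀ (isZero_zero C),
      ⟨hz.iso ((shiftFunctor C a).map_isZero (isZero_zero C))⟩⟩
  obtain ⟨𝒻⟩ := hH.filt V hz
  obtain ⟨𝒢, h𝒢⟩ := exists_filt_window hH 𝒻.m 𝒻 le_rfl (a - 1) (a + 2) hlow hhigh
  have hm2 : 𝒢.m ≤ 2 := by
    by_contra hcon
    have h01 := 𝒢.deg_strictAnti ⟨0, by omega⟩ ⟨1, by omega⟩ (by rw [Fin.mk_lt_mk]; omega)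
    have h12 := 𝒢.deg_strictAnti ⟨1, by omega⟩ ⟨2, by omega⟩ (by rw [Fin.mk_lt_mk]; omega)
    have b0 := h𝒢 ⟨0, by omega⟩
    have b2 := h𝒢 ⟨2, by omega⟩
    omega
  have hm0 : 𝒢.m ≠ 0 := by
    intro h0
    refine hz ?_
    have h2 : Fin.last 𝒢.m = 0 := by ext; simp [h0]
    have h1 := 𝒢.isZero_zero
    rw [← h2, 𝒢.obj_last] at h1
    exact h1
  obtain h1 | h2 : 𝒢.m = 1 ∨ 𝒢.m = 2 := by omega
  · -- a single piece
    have h0m : 0 < 𝒢.m := by omega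
    have hE : 𝒢.obj ((⟨0, h0m⟩ : Fin 𝒢.m).succ) = V := by
      rw [show ((⟨0, h0m⟩ : Fin 𝒢.m).succ) = Fin.last 𝒢.m from by
        ext; simp [Fin.last]; omega, 𝒢.obj_last]
    have hπ : IsIso (𝒢.π ⟨0, h0m⟩) :=
      (Triangle.isZero₁_iff_isIso₂ _ (𝒢.distinguished ⟨0, h0m⟩)).mp 𝒢.isZero_zero
    have e : V ≅ 𝒢.factor ⟨0, h0m⟩ := eqToIso hE.symm ≪≫ asIso (𝒢.π ⟨0, h0m⟩)
    have hbounds := h𝒢 ⟨0, h0m⟩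
    obtain hda | hda1 : 𝒢.deg ⟨0, h0m⟩ = a ∨ 𝒢.deg ⟨0, h0m⟩ = a + 1 := by omega
    · -- torsion piece
      have hmem : 𝒢.factor ⟨0, h0m⟩ ∈ shiftSet T a := by
        refine crit_T_shift hH htp (hda ▸ 𝒢.factor_mem ⟨0, h0m⟩) (fun Q hQ => ?_)
        exact (hlowF Q hQ).conj e.symm (Iso.refl _)
      exact mem_shiftSet_of_iso e.symm (shiftSet_mono (T_subset_S hH htp) a hmem)
    · -- torsion-free piece
      have hmem : 𝒢.factor ⟨0, h0m⟩ ∈ shiftSet F (a + 1) := by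
        refine crit_F_shift hH htp (hda1 ▸ 𝒢.factor_mem ⟨0, h0m⟩) (fun Q hQ => ?_)
        exact (hhighT Q hQ).conj (Iso.refl _) e.symm
      have hmem2 : 𝒢.factor ⟨0, h0m⟩ ∈ shiftSet (shiftSet F 1) a := by
        rw [shiftSet_shiftSet]
        exact (show (a : ℤ) + 1 = 1 + a by ring) ▸ hmem
      exact mem_shiftSet_of_iso e.symm (shiftSet_mono (Fshift_subset_S hH htp) a hmem2)
  · -- two pieces
    have h0m : 0 < 𝒢.m := by omega
    have h1m : 1 < 𝒢.m := by omega
    have hE2 : 𝒢.obj ((⟨1, h1m⟩ : Fin 𝒢.m).succ) = V := by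
      rw [show ((⟨1, h1m⟩ : Fin 𝒢.m).succ) = Fin.last 𝒢.m from by
        ext; simp [Fin.last]; omega, 𝒢.obj_last]
    have hπ : IsIso (𝒢.π ⟨0, h0m⟩) :=
      (Triangle.isZero₁_iff_isIso₂ _ (𝒢.distinguished ⟨0, h0m⟩)).mp 𝒢.isZero_zero
    have eV1 : 𝒢.obj ((⟨0, h0m⟩ : Fin 𝒢.m).succ) ≅ 𝒢.factor ⟨0, h0m⟩ := asIso (𝒢.π ⟨0, h0m⟩)
    have hdeg0 : 𝒢.deg ⟨0, h0m⟩ = a + 1 := by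
      have b0 := h𝒢 ⟨0, h0m⟩; have b1 := h𝒢 ⟨1, h1m⟩
      have := 𝒢.deg_strictAnti ⟨0, h0m⟩ ⟨1, h1m⟩ (by rw [Fin.mk_lt_mk]; omega)
      omega
    have hdeg1 : 𝒢.deg ⟨1, h1m⟩ = a := by
      have b0 := h𝒢 ⟨0, h0m⟩; have b1 := h𝒢 ⟨1, h1m⟩
      have := 𝒢.deg_strictAnti ⟨0, h0m⟩ ⟨1, h1m⟩ (by rw [Fin.mk_lt_mk]; omega)
      omega
    have hobj1mem : 𝒢.obj ((⟨0, h0m⟩ : Fin 𝒢.m).succ) ∈ shiftSet H (a + 1) :=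
      mem_shiftSet_of_iso eV1.symm (hdeg0 ▸ 𝒢.factor_mem ⟨0, h0m⟩)
    have hfac1 : 𝒢.factor ⟨1, h1m⟩ ∈ shiftSet T a := by
      refine crit_T_shift hH htp (hdeg1 ▸ 𝒢.factor_mem ⟨1, h1m⟩) (fun Q hQ => ?_)
      intro φ
      have hπφ : 𝒢.π ⟨1, h1m⟩ ≫ φ = 0 :=
        ((hlowF Q hQ).conj (eqToIso hE2) (Iso.refl _)) _
      obtain ⟨g, hg⟩ := Triangle.yoneda_exact₃ _ (𝒢.distinguished ⟨1, h1m⟩) φ hπφ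
      rw [hg]
      have hzg : Z0 ((𝒢.obj (Fin.castSucc ⟨1, h1m⟩))⟦(1 : ℤ)⟧) Q := by
        refine horth hH (show (a : ℤ) < a + 1 + 1 by omega)
          (mem_shiftSet_shift ?_ 1) (shiftSet_mono htp.subsetF a hQ)
        exact hobj1mem
      rw [hzg g]; exact comp_zero
    have hobj1F : 𝒢.obj (Fin.castSucc ⟨1, h1m⟩) ∈ shiftSet F (a + 1) := by
      refine crit_F_shift hH htp hobj1mem (fun Q hQ => ?_)
      intro ξ
      have hξι : ξ ≫ 𝒢.ι ⟨1, h1m⟩ = 0 :=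
        ((hhighT Q hQ).conj (Iso.refl _) (eqToIso hE2)) _
      obtain ⟨g, hg⟩ := Triangle.coyoneda_exact₂ _
        (inv_rot_of_distTriang _ (𝒢.distinguished ⟨1, h1m⟩)) ξ hξι
      rw [hg]
      have hzg : Z0 Q ((𝒢.factor ⟨1, h1m⟩)⟦(-1 : ℤ)⟧) := by
        refine horth hH (show (a : ℤ) + -1 < a + 1 by omega)
          (shiftSet_mono htp.subsetT _ hQ)
          (mem_shiftSet_shift (hdeg1 ▸ 𝒢.factor_mem _) (-1))
      rw [hzg g]; exact zero_comp
    have hT1' := dist_conj (Iso.refl (𝒢.obj (Fin.castSucc ⟨1, h1m⟩))) (eqToIso hE2)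
      (Iso.refl (𝒢.factor ⟨1, h1m⟩)) (𝒢.distinguished ⟨1, h1m⟩)
    have hTsh := Triangle.shift_distinguished _ hT1' (-a)
    refine ⟨V⟦(-a : ℤ)⟧, ?_, ⟨((shiftFunctorCompIsoId C (-a) a (by omega)).app V).symm⟩⟩
    refine ⟨(𝒢.obj (Fin.castSucc ⟨1, h1m⟩))⟦(-a : ℤ)⟧, (𝒢.factor ⟨1, h1m⟩)⟦(-a : ℤ)⟧,
      _, _, _, ?_, ?_, hTsh⟩
    · exact (show (a : ℤ) + 1 + -a = 1 by ring) ▸ mem_shiftSet_shift hobj1F (-a)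
    · obtain ⟨B, hB, ⟨e⟩⟩ := hfac1
      refine htp.isoClosedT (((shiftFunctor C (-a)).mapIso e ≪≫
        (shiftFunctorCompIsoId C a (-a) (by omega)).app B).symm) hB

end Tilt

section SOrth

open ZeroObject

variable {H T F : Set C}

lemma S_hom_orth (hH : IsHeart H) (htp : IsTorsionPair H T F) :
    ∀ k₁ k₂ : ℤ, k₂ < k₁ → ∀ A₁ A₂ : C, A₁ ∈ shiftSet (forwardTilt T F) k₁ →
      A₂ ∈ shiftSet (forwardTilt T F) k₂ → ∀ φ : A₁ ⟶ A₂, φ = 0 := by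
  intro k₁ k₂ hk A₁ A₂ hA₁ hA₂
  obtain ⟨E₁, hE₁, ⟨e₁⟩⟩ := hA₁
  obtain ⟨E₂, hE₂, ⟨e₂⟩⟩ := hA₂
  obtain ⟨X₁, Y₁, f₁, g₁, h₁, hX₁, hY₁, hT₁⟩ := hE₁
  obtain ⟨X₂, Y₂, f₂, g₂, h₂, hX₂, hY₂, hT₂⟩ := hE₂
  have hT₁' := Triangle.shift_distinguished _ hT₁ k₁
  have hT₂' := Triangle.shift_distinguished _ hT₂ k₂
  have mX₁ : X₁⟦k₁⟧ ∈ shiftSet H (1 + k₁) :=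
    mem_shiftSet_shift (shiftSet_mono htp.subsetF 1 hX₁) k₁
  have mX₂ : X₂⟦k₂⟧ ∈ shiftSet H (1 + k₂) :=
    mem_shiftSet_shift (shiftSet_mono htp.subsetF 1 hX₂) k₂
  have mY₁ : Y₁⟦k₁⟧ ∈ shiftSet H (0 + k₁) :=
    mem_shiftSet_shift (mem_shiftSet_zero (htp.subsetT hY₁)) k₁
  have mY₂ : Y₂⟦k₂⟧ ∈ shiftSet H (0 + k₂) :=
    mem_shiftSet_shift (mem_shiftSet_zero (htp.subsetT hY₂)) k₂
  have hXX : Z0 (X₁⟦k₁⟧) (X₂⟦k₂⟧) := horth hH (by omega) mX₁ mX₂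
  have hXY : Z0 (X₁⟦k₁⟧) (Y₂⟦k₂⟧) := horth hH (by omega) mX₁ mY₂
  have hYY : Z0 (Y₁⟦k₁⟧) (Y₂⟦k₂⟧) := horth hH (by omega) mY₁ mY₂
  have hYX : Z0 (Y₁⟦k₁⟧) (X₂⟦k₂⟧) := by
    rcases lt_or_eq_of_le (show 1 + k₂ ≤ k₁ by omega) with h | h
    · exact horth hH (by omega) mY₁ mX₂
    · refine torth htp (mem_shiftSet_shift (mem_shiftSet_zero hY₁) k₁) ?_
      have hmem : X₂⟦k₂⟧ ∈ shiftSet F (1 + k₂) := mem_shiftSet_shift hX₂ k₂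
      exact (show 1 + k₂ = 0 + k₁ by omega) ▸ hmem
  have s1 : Z0 (E₁⟦k₁⟧) (X₂⟦k₂⟧) := Z0_obj₂_src hT₁' hXX hYX
  have s2 : Z0 (E₁⟦k₁⟧) (Y₂⟦k₂⟧) := Z0_obj₂_src hT₁' hXY hYY
  have s3 : Z0 (E₁⟦k₁⟧) (E₂⟦k₂⟧) := Z0_obj₂_tgt hT₂' s1 s2
  exact s3.conj e₁ e₂

end SOrth

section MainRec

open ZeroObject

variable {H T F : Set C}

lemma Z0_shift_cancel {X Q : C} (h : Z0 X (Q⟦(-1 : ℤ)⟧)) : Z0 (X⟦(1 : ℤ)⟧) Q :=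
  (h.shift 1).conj (Iso.refl _) ((shiftFunctorCompIsoId C (-1) 1 (by omega)).app Q).symm

/-- The main recursive construction: given a filtration of `E` with lowest degree `a`
and degrees bounded by `hi`, we produce the "torsion-free strip" `M' → E → Y⟦a⟧`
together with an `H♯`-filtration of `M'` with degrees in `[a, hi]`, and the key
vanishing properties of `M'`. -/
lemma main_rec (hH : IsHeart H) (htp : IsTorsionPair H T F) :
    ∀ (w : ℕ) {E : C} (𝒻 : HNFiltration H E) (k : ℕ) (hk : k + 1 = 𝒻.m) (a : ℤ)
      (ha : 𝒻.deg ⟨k, by omega⟩ = a) (hi : ℤ)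
      (hhi : ∀ i, 𝒻.deg i ≤ hi) (hw : (hi - a).toNat ≤ w),
    ∃ (M' Y : C) (g : M' ⟶ E) (q : E ⟶ Y⟦a⟧) (δ : Y⟦a⟧ ⟶ M'⟦(1 : ℤ)⟧),
      Y ∈ F ∧ Triangle.mk g q δ ∈ (distTriang C) ∧
      (∀ (kq : ℤ), kq ≤ a - 1 → ∀ Q ∈ shiftSet H kq, Z0 M' Q) ∧
      (∀ Q ∈ shiftSet F a, Z0 M' Q) ∧
      ∃ 𝒢 : HNFiltration (forwardTilt T F) M', ∀ i, a ≤ 𝒢.deg i ∧ 𝒢.deg i ≤ hi := by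
  intro w
  induction w using Nat.strong_induction_on with
  | _ w ih =>
  intro E 𝒻 k hk a ha hi hhi hw
  have hkm : k < 𝒻.m := by omega
  -- the bottom factor and its torsion decomposition
  have hfm := 𝒻.factor_mem ⟨k, hkm⟩
  rw [ha] at hfm
  obtain ⟨B, hB, ⟨eB⟩⟩ := hfm
  obtain ⟨X, Yb, fb, gb, hb, hX, hYb, hTb⟩ := htp.decomp B hB
  obtain ⟨st, ut, δt, hTt⟩ : ∃ (st : X⟦a⟧ ⟶ 𝒻.factor ⟨k, hkm⟩)
      (ut : 𝒻.factor ⟨k, hkm⟩ ⟶ Yb⟦a⟧) (δt : Yb⟦a⟧ ⟶ (X⟦a⟧)⟦(1 : ℤ)⟧),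
      Triangle.mk st ut δt ∈ distTriang C :=
    ⟨_, _, _, dist_conj (Iso.refl _) eB.symm (Iso.refl _)
      (Triangle.shift_distinguished _ hTb a)⟩
  -- the top tower triangle, with second object transported to `E`
  have hlastobj : 𝒻.obj ((⟨k, hkm⟩ : Fin 𝒻.m).succ) = E := by
    rw [show ((⟨k, hkm⟩ : Fin 𝒻.m).succ) = Fin.last 𝒻.m from by
      ext; simp [Fin.last]; omega, 𝒻.obj_last]
  obtain ⟨ιl, πl, δl, hTow⟩ : ∃ (ιl : 𝒻.obj (Fin.castSucc ⟨k, hkm⟩) ⟶ E)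
      (πl : E ⟶ 𝒻.factor ⟨k, hkm⟩)
      (δl : 𝒻.factor ⟨k, hkm⟩ ⟶ (𝒻.obj (Fin.castSucc ⟨k, hkm⟩))⟦(1 : ℤ)⟧),
      Triangle.mk ιl πl δl ∈ distTriang C :=
    ⟨_, _, _, dist_conj (Iso.refl _) (eqToIso hlastobj) (Iso.refl _)
      (𝒻.distinguished ⟨k, hkm⟩)⟩
  -- the strip
  set q : E ⟶ Yb⟦a⟧ := πl ≫ ut with hqdef
  obtain ⟨M', gM, δM, hTq⟩ := distinguished_cocone_triangle₁ q
  -- the filtration of the truncation, shifted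
  have ZW1 : ∀ (Q' : C) (t : ℤ), t ≤ a + 1 → Q' ∈ shiftSet H t →
      Z0 ((𝒻.obj (Fin.castSucc ⟨k, hkm⟩))⟦(1 : ℤ)⟧) Q' := by
    intro Q' t ht hQ'
    refine ((𝒻.trunc k hk).shiftF 1).z0_src (fun i => ?_)
    have hik : i.val < k := i.isLt
    refine horth hH ?_ (mem_shiftSet_shift (𝒻.factor_mem ⟨i.val, by omega⟩) 1) hQ'
    have := 𝒻.deg_strictAnti ⟨i.val, by omega⟩ ⟨k, hkm⟩ (by rw [Fin.mk_lt_mk]; exact hik)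
    omega
  have ZX1 : ∀ (Q : C), ((∃ kq ≤ a - 1, Q ∈ shiftSet H kq) ∨ Q ∈ shiftSet F a) →
      Z0 ((X⟦a⟧)⟦(1 : ℤ)⟧) (Q⟦(1 : ℤ)⟧) := by
    intro Q hQ
    have hmemX : (X⟦a⟧)⟦(1 : ℤ)⟧ ∈ shiftSet T (0 + a + 1) :=
      mem_shiftSet_shift (mem_shiftSet_shift (mem_shiftSet_zero hX) a) 1
    rcases hQ with ⟨kq, hkq, hQ⟩ | hQ
    · exact horth hH (by omega) (shiftSet_mono htp.subsetT _ hmemX)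
        (mem_shiftSet_shift hQ 1)
    · refine torth htp hmemX ?_
      exact (show a + 1 = 0 + a + 1 by ring) ▸ mem_shiftSet_shift hQ 1
  have hge : ∀ i, a ≤ 𝒻.deg i := by
    intro i
    rcases eq_or_lt_of_le (show i.val ≤ k by have := i.isLt; omega) with h | h
    · have : i = ⟨k, hkm⟩ := by ext; exact h
      rw [this]; omega
    · have := 𝒻.deg_strictAnti i ⟨k, hkm⟩ (by rw [Fin.lt_def]; exact h)
      omega
  -- ★ : the vanishing properties of M'
  have star : ∀ (Q : C), ((∃ kq ≤ a - 1, Q ∈ shiftSet H kq) ∨ Q ∈ shiftSet F a) →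
      Z0 M' Q := by
    intro Q hQcond
    have hQ1 : ∃ t ≤ a + 1, Q⟦(1 : ℤ)⟧ ∈ shiftSet H t := by
      rcases hQcond with ⟨kq, hkq, hQ⟩ | hQ
      · exact ⟨kq + 1, by omega, mem_shiftSet_shift hQ 1⟩
      · exact ⟨a + 1, le_rfl, mem_shiftSet_shift (shiftSet_mono htp.subsetF a hQ) 1⟩
    obtain ⟨t1, ht1, hQ1⟩ := hQ1
    refine Z0.unshift 1 ?_
    intro φ
    have hTrot := rot_of_distTriang _ hTq
    -- Step A : δM ≫ φ = 0
    have hstepA : δM ≫ φ = 0 := by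
      have hqδ : q ≫ δM = 0 := comp_distTriang_mor_zero₂₃ _ hTq
      have hπχ : πl ≫ ut ≫ δM ≫ φ = 0 := by
        have : πl ≫ ut ≫ δM ≫ φ = (q ≫ δM) ≫ φ := by
          rw [hqdef]; simp only [Category.assoc]
        rw [this, hqδ, zero_comp]
      obtain ⟨ω, hω⟩ := Triangle.yoneda_exact₃ _ hTow (ut ≫ δM ≫ φ) hπχ
      have hω0 : ω = 0 := ZW1 _ t1 ht1 hQ1 ω
      have hχ : ut ≫ δM ≫ φ = 0 := by rw [hω0] at hω; exact hω.trans comp_zero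
      obtain ⟨ϑ, hϑ⟩ := Triangle.yoneda_exact₃ _ hTt (δM ≫ φ) hχ
      rw [ZX1 Q hQcond ϑ] at hϑ; exact hϑ.trans comp_zero
    obtain ⟨gg, hgg⟩ := Triangle.yoneda_exact₃ _ hTrot φ hstepA
    rw [hgg]
    rcases hQcond with ⟨kq, hkq, hQ⟩ | hQ
    · have hZE : Z0 (E⟦(1 : ℤ)⟧) (Q⟦(1 : ℤ)⟧) := by
        refine (𝒻.shiftF 1).z0_src (fun i => ?_)
        refine horth hH ?_ (mem_shiftSet_shift (𝒻.factor_mem i) 1)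
          (mem_shiftSet_shift hQ 1)
        have := hge i
        omega
      rw [hZE gg]; exact comp_zero
    · have hT6 := Triangle.shift_distinguished _ hTow 1
      have hZW : Z0 ((𝒻.obj (Fin.castSucc ⟨k, hkm⟩))⟦(1 : ℤ)⟧) (Q⟦(1 : ℤ)⟧) :=
        ZW1 _ (a + 1) le_rfl (mem_shiftSet_shift (shiftSet_mono htp.subsetF a hQ) 1)
      have hmor1 : ((CategoryTheory.shiftFunctor (Triangle C) (1 : ℤ)).obj
          (Triangle.mk ιl πl δl)).mor₁ = (1 : ℤ).negOnePow • (ιl⟦(1 : ℤ)⟧') := rfl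
      obtain ⟨χ₂, hχ₂⟩ := Triangle.yoneda_exact₂ _ hT6 gg (by
        erw [hmor1, Linear.units_smul_comp, hZW (ιl⟦(1 : ℤ)⟧' ≫ gg)]; exact smul_zero ((1 : ℤ).negOnePow))
      have hmor2 : ((CategoryTheory.shiftFunctor (Triangle C) (1 : ℤ)).obj
          (Triangle.mk ιl πl δl)).mor₂ = (1 : ℤ).negOnePow • (πl⟦(1 : ℤ)⟧') := rfl
      have hσ : (gM ≫ πl) ≫ ut = 0 := by
        rw [Category.assoc, ← hqdef]
        exact comp_distTriang_mor_zero₁₂ _ hTq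
      obtain ⟨G', hG'⟩ := Triangle.coyoneda_exact₂ _ hTt (gM ≫ πl) hσ
      have hXQ : Z0 ((X⟦a⟧)⟦(1 : ℤ)⟧) (Q⟦(1 : ℤ)⟧) := ZX1 Q (Or.inr hQ)
      have hcore : gM⟦(1 : ℤ)⟧' ≫ πl⟦(1 : ℤ)⟧' ≫ χ₂ = 0 := by
        erw [← Functor.map_comp_assoc, hG', Functor.map_comp, Category.assoc,
          hXQ ((Triangle.mk st ut δt).mor₁⟦(1 : ℤ)⟧' ≫ χ₂), comp_zero]
      have hrotmor : (Triangle.mk gM q δM).rotate.mor₃ = -(gM⟦(1 : ℤ)⟧') := rfl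
      erw [hχ₂, hmor2, hrotmor, Linear.units_smul_comp, Linear.comp_units_smul,
        Preadditive.neg_comp, hcore, neg_zero, smul_zero]; rfl
  -- high vanishing for M'
  have vhigh : ∀ (kq : ℤ), hi + 1 ≤ kq → ∀ Q ∈ shiftSet H kq, Z0 Q M' := by
    intro kq hkq Q hQ
    refine Z0.unshift 1 ?_
    intro φ
    have hTrot := rot_of_distTriang _ hTq
    have hZE : Z0 (Q⟦(1 : ℤ)⟧) (E⟦(1 : ℤ)⟧) := by
      refine (𝒻.shiftF 1).z0_tgt (fun i => ?_)
      refine horth hH ?_ (mem_shiftSet_shift hQ 1) (mem_shiftSet_shift (𝒻.factor_mem i) 1)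
      have := hhi i
      omega
    have hrotmor₃ : (Triangle.mk gM q δM).rotate.mor₃ = -(gM⟦(1 : ℤ)⟧') := rfl
    obtain ⟨g, hg⟩ := Triangle.coyoneda_exact₃ _ hTrot φ (by
      erw [hrotmor₃, Preadditive.comp_neg, hZE (φ ≫ gM⟦(1 : ℤ)⟧'), neg_zero])
    have hZY : Z0 (Q⟦(1 : ℤ)⟧) (Yb⟦a⟧) := by
      refine horth hH ?_ (mem_shiftSet_shift hQ 1)
        (mem_shiftSet_shift (mem_shiftSet_zero (htp.subsetF hYb)) a)
      have := hhi ⟨k, hkm⟩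
      omega
    rw [hg, hZY g]; exact zero_comp
  have hahi : a ≤ hi := ha ▸ hhi ⟨k, hkm⟩
  have snocb : ∀ {M₀ E₀ P₀ : C} {𝒻₀ : HNFiltration (forwardTilt T F) M₀} {d : ℤ}
      {hd : ∀ i, d < 𝒻₀.deg i} {hP : P₀ ∈ shiftSet (forwardTilt T F) d} {g₀ : M₀ ⟶ E₀}
      {p₀ : E₀ ⟶ P₀} {δ₀ : P₀ ⟶ M₀⟦(1 : ℤ)⟧} {hT₀ : Triangle.mk g₀ p₀ δ₀ ∈ distTriang C}
      {lo hi' : ℤ}, lo ≤ d → d ≤ hi' → (∀ i, lo ≤ 𝒻₀.deg i ∧ 𝒻₀.deg i ≤ hi') →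
      ∀ i, lo ≤ (𝒻₀.snoc d hd hP g₀ p₀ δ₀ hT₀).deg i ∧
        (𝒻₀.snoc d hd hP g₀ p₀ δ₀ hT₀).deg i ≤ hi' := by
    intro M₀ E₀ P₀ 𝒻₀ d hd hP g₀ p₀ δ₀ hT₀ lo hi' h1 h2 h3 i
    have key : ∀ i' : Fin (𝒻₀.m + 1), lo ≤ (Fin.snoc 𝒻₀.deg d : Fin (𝒻₀.m + 1) → ℤ) i' ∧
        (Fin.snoc 𝒻₀.deg d : Fin (𝒻₀.m + 1) → ℤ) i' ≤ hi' := by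
      intro i'
      induction i' using Fin.lastCases with
      | last => rw [Fin.snoc_last]; exact ⟨h1, h2⟩
      | cast j => rw [Fin.snoc_castSucc]; exact h3 j
    exact key i
  -- construct the `H♯`-filtration of `M'`
  have main : ∃ 𝒢 : HNFiltration (forwardTilt T F) M', ∀ i, a ≤ 𝒢.deg i ∧ 𝒢.deg i ≤ hi := by
    by_cases hMz : IsZero M'
    · refine ⟨HNFiltration.ofIsZero _ hMz, fun i => ?_⟩
      exact (Nat.not_lt_zero _ i.isLt).elim
    obtain ⟨𝒻M⟩ := hH.filt M' hMz
    obtain ⟨𝒻'', h𝒻''⟩ := exists_filt_window hH 𝒻M.m 𝒻M le_rfl (a - 1) (hi + 1)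
      (fun kq hkq Q hQ => star Q (Or.inl ⟨kq, hkq, hQ⟩)) vhigh
    have hm''0 : 𝒻''.m ≠ 0 := by
      intro h0
      refine hMz ?_
      have h2 : Fin.last 𝒻''.m = 0 := by ext; simp [h0]
      have h1 := 𝒻''.isZero_zero
      rw [← h2, 𝒻''.obj_last] at h1
      exact h1
    obtain ⟨k'', hk''⟩ : ∃ k'', k'' + 1 = 𝒻''.m := ⟨𝒻''.m - 1, by omega⟩
    have hk''m : k'' < 𝒻''.m := by omega
    set a' := 𝒻''.deg ⟨k'', hk''m⟩ with ha'
    have hgea : a ≤ a' := by have := (h𝒻'' ⟨k'', hk''m⟩).1; omega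
    have hhi'' : ∀ i, 𝒻''.deg i ≤ hi := fun i => by have := (h𝒻'' i).2; omega
    by_cases ha'a : a' = a
    · -- the bottom piece of `M'` sits at level `a` and is torsion
      have hlast'' : 𝒻''.obj ((⟨k'', hk''m⟩ : Fin 𝒻''.m).succ) = M' := by
        rw [show ((⟨k'', hk''m⟩ : Fin 𝒻''.m).succ) = Fin.last 𝒻''.m from by
          ext; simp [Fin.last]; omega, 𝒻''.obj_last]
      obtain ⟨j', π', δ', hTX⟩ : ∃ (j' : 𝒻''.obj (Fin.castSucc ⟨k'', hk''m⟩) ⟶ M')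
          (π' : M' ⟶ 𝒻''.factor ⟨k'', hk''m⟩)
          (δ' : 𝒻''.factor ⟨k'', hk''m⟩ ⟶ (𝒻''.obj (Fin.castSucc ⟨k'', hk''m⟩))⟦(1 : ℤ)⟧),
          Triangle.mk j' π' δ' ∈ distTriang C :=
        ⟨_, _, _, dist_conj (Iso.refl _) (eqToIso hlast'') (Iso.refl _)
          (𝒻''.distinguished ⟨k'', hk''m⟩)⟩
      have hCH : 𝒻''.factor ⟨k'', hk''m⟩ ∈ shiftSet H a := by
        have hh := 𝒻''.factor_mem ⟨k'', hk''m⟩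
        rw [← ha', ha'a] at hh
        exact hh
      have hCt : 𝒻''.factor ⟨k'', hk''m⟩ ∈ shiftSet T a := by
        refine crit_T_shift hH htp hCH (fun Q hQ => ?_)
        intro φC
        have hπφ : π' ≫ φC = 0 := star Q (Or.inr hQ) _
        obtain ⟨ω, hω⟩ := Triangle.yoneda_exact₃ _ hTX φC hπφ
        have hω0 : ω = 0 := by
          refine ((𝒻''.trunc k'' hk'').shiftF 1).z0_src (fun i => ?_) ω
          have hik : i.val < k'' := i.isLt
          refine horth hH ?_ (mem_shiftSet_shift (𝒻''.factor_mem ⟨i.val, by omega⟩) 1)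
            (shiftSet_mono htp.subsetF a hQ)
          have := 𝒻''.deg_strictAnti ⟨i.val, by omega⟩ ⟨k'', hk''m⟩
            (by rw [Fin.mk_lt_mk]; exact hik)
          omega
        rw [hω, hω0]; exact comp_zero
      have hCmem : 𝒻''.factor ⟨k'', hk''m⟩ ∈ shiftSet (forwardTilt T F) a :=
        shiftSet_mono (T_subset_S hH htp) a hCt
      by_cases hm''1 : 𝒻''.m = 1
      · -- only one piece
        have hPz : IsZero (𝒻''.obj (Fin.castSucc ⟨k'', hk''m⟩)) := by
          have hk''0 : k'' = 0 := by omega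
          have h2 : Fin.castSucc (⟨k'', hk''m⟩ : Fin 𝒻''.m) = 0 :=
            Fin.ext (by simp [hk''0])
          rw [h2]
          exact 𝒻''.isZero_zero
        refine ⟨(HNFiltration.ofIsZero _ hPz).snoc a (fun i => (Nat.not_lt_zero _ i.isLt).elim)
          hCmem j' π' δ' hTX, ?_⟩
        refine snocb le_rfl hahi (fun i => ?_)
        exact (Nat.not_lt_zero _ i.isLt).elim
      · -- at least two pieces : recurse on the truncation
        have hk''1 : 1 ≤ k'' := by omega
        have hkP : (k'' - 1) + 1 = (𝒻''.trunc k'' hk'').m := by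
          have : (𝒻''.trunc k'' hk'').m = k'' := rfl
          omega
        have hkPm : k'' - 1 < (𝒻''.trunc k'' hk'').m := by omega
        set a'' := (𝒻''.trunc k'' hk'').deg ⟨k'' - 1, hkPm⟩ with ha''def
        have ha''gt : a + 1 ≤ a'' := by
          have h2 := 𝒻''.deg_strictAnti ⟨k'' - 1, by omega⟩ ⟨k'', hk''m⟩
            (by rw [Fin.mk_lt_mk]; omega)
          have h3 : a'' = 𝒻''.deg ⟨k'' - 1, by omega⟩ := rfl
          omega
        have ha''hi : a'' ≤ hi := by
          have h3 : a'' = 𝒻''.deg ⟨k'' - 1, by omega⟩ := rfl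
          rw [h3]
          exact hhi'' _
        have hhiP : ∀ i, (𝒻''.trunc k'' hk'').deg i ≤ hi := by
          intro i
          have hik : i.val < k'' := i.isLt
          exact hhi'' ⟨i.val, by omega⟩
        obtain ⟨P', Y'', α, β, δP, hY'', hTP, starP1, starP2, 𝒢P, h𝒢P⟩ :=
          ih ((hi - a'').toNat) (by omega) (𝒻''.trunc k'' hk'') (k'' - 1) hkP a''
            ha''def.symm hi hhiP (by omega)
        by_cases hmerge : a'' = a + 1
        · -- merge the two boundary pieces
          obtain ⟨V, eV, δV, hTV⟩ := distinguished_cocone_triangle (α ≫ j')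
          obtain ⟨π₂, hπ₂₁, hπ₂₂⟩ := complete_distinguished_triangle_morphism
            (Triangle.mk (α ≫ j') eV δV) (Triangle.mk j' π' δ') hTV hTX α (𝟙 M')
            (by exact Category.comp_id _)
          have hVlow : ∀ (Q : C), ((∃ kq ≤ a - 1, Q ∈ shiftSet H kq) ∨ Q ∈ shiftSet F a) →
              Z0 V Q := by
            intro Q hQ φV
            have hstep : eV ≫ φV = 0 := star Q hQ _
            obtain ⟨ω, hω⟩ := Triangle.yoneda_exact₃ _ hTV φV hstep
            have hω0 : ω = 0 := by
              refine Z0_shift_cancel ?_ ω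
              rcases hQ with ⟨kq, hkq, hQm⟩ | hQm
              · exact starP1 (kq + -1) (by omega) _ (mem_shiftSet_shift hQm (-1))
              · exact starP1 (a + -1) (by omega) _
                  (mem_shiftSet_shift (shiftSet_mono htp.subsetF a hQm) (-1))
            rw [hω, hω0]; exact comp_zero
          have hVhigh : ∀ (Q' : C), ((∃ kq, a + 2 ≤ kq ∧ Q' ∈ shiftSet H kq) ∨
              Q' ∈ shiftSet T (a + 1)) → Z0 Q' V := by
            intro Q' hQ' φ
            have hQ'H : ∃ t, a + 1 ≤ t ∧ Q' ∈ shiftSet H t := by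
              rcases hQ' with ⟨kq, hkq, hQm⟩ | hQm
              · exact ⟨kq, by omega, hQm⟩
              · exact ⟨a + 1, le_rfl, shiftSet_mono htp.subsetT _ hQm⟩
            obtain ⟨t, ht, hQ'm⟩ := hQ'H
            have hZC : Z0 Q' (𝒻''.factor ⟨k'', hk''m⟩) :=
              horth hH (by omega) hQ'm hCH
            have hZY'' : Z0 Q' (Y''⟦a''⟧) := by
              rcases hQ' with ⟨kq, hkq, hQm⟩ | hQm
              · refine horth hH ?_ hQm
                  (mem_shiftSet_shift (mem_shiftSet_zero (htp.subsetF hY'')) a'')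
                omega
              · refine torth htp hQm ?_
                exact (show a + 1 = 0 + a'' by omega) ▸
                  mem_shiftSet_shift (mem_shiftSet_zero hY'') a''
            have hπ₂₂' : δV ≫ α⟦(1 : ℤ)⟧' = π₂ ≫ δ' := hπ₂₂
            have hs2 : (φ ≫ δV) ≫ α⟦(1 : ℤ)⟧' = 0 := by
              erw [Category.assoc, hπ₂₂', ← Category.assoc, hZC (φ ≫ π₂), zero_comp]
            have hrotP := rot_of_distTriang _ hTP
            have hrotmor₃ : (Triangle.mk α β δP).rotate.mor₃ = -(α⟦(1 : ℤ)⟧') := rfl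
            obtain ⟨g3, hg3⟩ := Triangle.coyoneda_exact₃ _ hrotP (φ ≫ δV) (by
              erw [hrotmor₃, Preadditive.comp_neg, hs2, neg_zero])
            have hψ0 : φ ≫ δV = 0 := by rw [hZY'' g3] at hg3; exact hg3.trans zero_comp
            obtain ⟨χ, hχ⟩ := Triangle.coyoneda_exact₃ _ hTV φ hψ0
            obtain ⟨χ', hχ'⟩ := Triangle.coyoneda_exact₂ _ hTX χ (hZC (χ ≫ π'))
            obtain ⟨χ'', hχ''⟩ := Triangle.coyoneda_exact₂ _ hTP χ' (hZY'' (χ' ≫ β))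
            have hγe : (α ≫ j') ≫ eV = 0 := comp_distTriang_mor_zero₁₂ _ hTV
            rw [hχ, hχ', hχ'']
            show ((χ'' ≫ α) ≫ j') ≫ eV = 0
            erw [Category.assoc, Category.assoc, show α ≫ j' ≫ eV = (α ≫ j') ≫ eV from
              (Category.assoc _ _ _).symm, hγe, comp_zero]
          have hVS : V ∈ shiftSet (forwardTilt T F) a := by
            refine mem_shiftSet_S_of_van hH htp a ⟨Yb, hYb⟩ ?_ ?_ ?_ ?_
            · exact fun kq hkq Q hQ => hVlow Q (Or.inl ⟨kq, hkq, hQ⟩)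
            · exact fun Q hQ => hVlow Q (Or.inr hQ)
            · exact fun kq hkq Q hQ => hVhigh Q (Or.inl ⟨kq, hkq, hQ⟩)
            · exact fun Q hQ => hVhigh Q (Or.inr hQ)
          exact ⟨𝒢P.snoc a (fun i => by have := (h𝒢P i).1; omega) hVS (α ≫ j') eV δV hTV,
            snocb le_rfl hahi (fun i => ⟨by have := (h𝒢P i).1; omega, (h𝒢P i).2⟩)⟩
        · -- no merge needed
          have hY''S : Y''⟦a''⟧ ∈ shiftSet (forwardTilt T F) (a'' - 1) :=
            ⟨Y''⟦(1 : ℤ)⟧, Fshift_subset_S hH htp (shift_mem_shiftSet hY'' 1),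
              ⟨(shiftFunctorAdd' C 1 (a'' - 1) a'' (by ring)).app Y''⟩⟩
          have hb1 := snocb (𝒻₀ := 𝒢P) (lo := a'' - 1) (hi' := hi)
            (hd := fun i => by have := (h𝒢P i).1; omega) (hP := hY''S) (hT₀ := hTP)
            le_rfl (by omega) (fun j => ⟨by have := (h𝒢P j).1; omega, (h𝒢P j).2⟩)
          refine ⟨(𝒢P.snoc (a'' - 1) (fun i => by have := (h𝒢P i).1; omega) hY''S
            α β δP hTP).snoc a (fun i => by have := (hb1 i).1; omega) hCmem j' π' δ' hTX, ?_⟩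
          refine snocb le_rfl hahi (fun i => ⟨by have := (hb1 i).1; omega, (hb1 i).2⟩)
    · -- the bottom level of `M'` is strictly above `a` : recurse on `M'`
      have ha'gt : a < a' := lt_of_le_of_ne hgea (Ne.symm ha'a)
      have ha'hi : a' ≤ hi := hhi'' _
      obtain ⟨M'', Y₂, g₂, q₂, δ₂, hY₂, hT₂, -, -, 𝒢₂, h𝒢₂⟩ :=
        ih ((hi - a').toNat) (by omega) 𝒻'' k'' hk'' a' ha'.symm hi hhi'' (by omega)
      have hY₂S : Y₂⟦a'⟧ ∈ shiftSet (forwardTilt T F) (a' - 1) :=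
        ⟨Y₂⟦(1 : ℤ)⟧, Fshift_subset_S hH htp (shift_mem_shiftSet hY₂ 1),
          ⟨(shiftFunctorAdd' C 1 (a' - 1) a' (by ring)).app Y₂⟩⟩
      refine ⟨𝒢₂.snoc (a' - 1) (fun i => by have := (h𝒢₂ i).1; omega) hY₂S g₂ q₂ δ₂ hT₂, ?_⟩
      refine snocb (by omega) (by omega) ?_
      exact fun i => ⟨by have := (h𝒢₂ i).1; omega, (h𝒢₂ i).2⟩
  obtain ⟨𝒢, h𝒢⟩ := main
  exact ⟨M', Yb, gM, q, δM, hYb, hTq,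
    (fun kq hkq Q hQ => star Q (Or.inl ⟨kq, hkq, hQ⟩)),
    (fun Q hQ => star Q (Or.inr hQ)), 𝒢, h𝒢⟩

end MainRec

section Assembly

open ZeroObject

variable {H T F : Set C}

/-- The forward tilting theorem. -/
lemma forward_result (hH : IsHeart H) (htp : IsTorsionPair H T F) :
    IsHeart (forwardTilt T F) ∧ IsTorsionPair (forwardTilt T F) (shiftSet F 1) T := by
  constructor
  · refine ⟨fun X Y e hX => S_isoClosed e hX, S_hom_orth hH htp, ?_⟩
    intro E hE
    obtain ⟨𝒻⟩ := hH.filt E hE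
    have hm0 : 𝒻.m ≠ 0 := by
      intro h0
      refine hE ?_
      have h2 : Fin.last 𝒻.m = 0 := by ext; simp [h0]
      have h1 := 𝒻.isZero_zero
      rw [← h2, 𝒻.obj_last] at h1
      exact h1
    obtain ⟨k, hk⟩ : ∃ k, k + 1 = 𝒻.m := ⟨𝒻.m - 1, by omega⟩
    have hkm : k < 𝒻.m := by omega
    have h0m : 0 < 𝒻.m := by omega
    have hbound : ∀ i, 𝒻.deg i ≤ 𝒻.deg ⟨0, h0m⟩ := by
      intro i
      rcases Nat.eq_zero_or_pos i.val with h | h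
      · have : i = ⟨0, h0m⟩ := by ext; exact h
        rw [this]
      · have := 𝒻.deg_strictAnti ⟨0, h0m⟩ i (by rw [Fin.lt_def]; exact h)
        omega
    obtain ⟨M', Y, g, q, δ, hY, hTq, -, -, 𝒢, h𝒢⟩ :=
      main_rec hH htp ((𝒻.deg ⟨0, h0m⟩ - 𝒻.deg ⟨k, hkm⟩).toNat) 𝒻 k hk
        (𝒻.deg ⟨k, hkm⟩) rfl (𝒻.deg ⟨0, h0m⟩) hbound le_rfl
    have hYS : Y⟦𝒻.deg ⟨k, hkm⟩⟧ ∈ shiftSet (forwardTilt T F) (𝒻.deg ⟨k, hkm⟩ - 1) :=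
      ⟨Y⟦(1 : ℤ)⟧, Fshift_subset_S hH htp (shift_mem_shiftSet hY 1),
        ⟨(shiftFunctorAdd' C 1 (𝒻.deg ⟨k, hkm⟩ - 1) (𝒻.deg ⟨k, hkm⟩) (by ring)).app Y⟩⟩
    exact ⟨𝒢.snoc (𝒻.deg ⟨k, hkm⟩ - 1) (fun i => by have := (h𝒢 i).1; omega) hYS g q δ hTq⟩
  · refine ⟨fun X Y e hX => mem_shiftSet_of_iso e hX, fun X Y e hX => htp.isoClosedT e hX,
      Fshift_subset_S hH htp, T_subset_S hH htp, ?_, ?_⟩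
    · intro X hX Y hY
      exact horth hH (show (0 : ℤ) < 1 by omega) (shiftSet_mono htp.subsetF 1 hX)
        (mem_shiftSet_zero (htp.subsetT hY))
    · intro E hE
      obtain ⟨X, Y, f, g, h, hX, hY, hT⟩ := hE
      exact ⟨X, Y, f, g, h, hX, hY, hT⟩

lemma shift_heart (hH : IsHeart H) : IsHeart (shiftSet H (-1)) := by
  refine ⟨fun X Y e hX => mem_shiftSet_of_iso e hX, ?_, ?_⟩
  · intro k₁ k₂ hk A₁ A₂ hA₁ hA₂
    rw [shiftSet_shiftSet] at hA₁ hA₂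
    exact hH.hom_orth (-1 + k₁) (-1 + k₂) (by omega) A₁ A₂ hA₁ hA₂
  · intro E hE
    obtain ⟨𝒻⟩ := hH.filt E hE
    refine ⟨𝒻.changeDeg (fun i => 𝒻.deg i + 1)
      (fun i j hij => by have := 𝒻.deg_strictAnti i j hij; omega) (fun i => ?_)⟩
    rw [shiftSet_shiftSet]
    exact (show 𝒻.deg i = -1 + (𝒻.deg i + 1) by ring) ▸ 𝒻.factor_mem i

lemma shift_tp (hH : IsHeart H) (htp : IsTorsionPair H T F) :
    IsTorsionPair (shiftSet H (-1)) (shiftSet T (-1)) (shiftSet F (-1)) := by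
  refine ⟨fun X Y e hX => mem_shiftSet_of_iso e hX, fun X Y e hX => mem_shiftSet_of_iso e hX,
    shiftSet_mono htp.subsetT _, shiftSet_mono htp.subsetF _, ?_, ?_⟩
  · exact fun X hX Y hY => torth htp hX hY
  · intro E hE
    obtain ⟨B, hB, ⟨e⟩⟩ := hE
    obtain ⟨X, Y, f, g, h, hX, hY, hT⟩ := htp.decomp B hB
    obtain ⟨f', g', h'', hT'⟩ : ∃ (f' : X⟦(-1 : ℤ)⟧ ⟶ E) (g' : E ⟶ Y⟦(-1 : ℤ)⟧)
        (h'' : Y⟦(-1 : ℤ)⟧ ⟶ (X⟦(-1 : ℤ)⟧)⟦(1 : ℤ)⟧),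
        Triangle.mk f' g' h'' ∈ distTriang C :=
      ⟨_, _, _, dist_conj (Iso.refl _) e.symm (Iso.refl _)
        (Triangle.shift_distinguished _ hT (-1))⟩
    exact ⟨X⟦(-1 : ℤ)⟧, Y⟦(-1 : ℤ)⟧, f', g', h'', shift_mem_shiftSet hX (-1),
      shift_mem_shiftSet hY (-1), hT'⟩

lemma shiftF_eq (htp : IsTorsionPair H T F) : shiftSet (shiftSet F (-1)) 1 = F := by
  ext X
  constructor
  · rintro ⟨A', hA', ⟨e⟩⟩
    obtain ⟨A, hA, ⟨e'⟩⟩ := hA'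
    refine htp.isoClosedF (X := A) ?_ hA
    exact ((e ≪≫ (shiftFunctor C (1 : ℤ)).mapIso e' ≪≫
      (shiftFunctorCompIsoId C (-1) 1 (by omega)).app A)).symm
  · intro hX
    exact ⟨X⟦(-1 : ℤ)⟧, shift_mem_shiftSet hX (-1),
      ⟨((shiftFunctorCompIsoId C (-1) 1 (by omega)).app X).symm⟩⟩

lemma backward_eq (htp : IsTorsionPair H T F) :
    forwardTilt (shiftSet T (-1)) (shiftSet F (-1)) = backwardTilt T F := by
  unfold forwardTilt backwardTilt
  rw [shiftF_eq htp]

end Assembly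

end HRSAux

/-- Happel–Reiten–Smalø tilting: for any torsion pair `⟨T, F⟩` in a heart
`H`, the forward tilt `H♯` is again a heart, with torsion pair `⟨F[1], T⟩`, and the
backward tilt `H♭` is again a heart, with torsion pair `⟨F, T[-1]⟩`. -/
theorem statement_7 (H T F : Set C) (hH : IsHeart H) (htp : IsTorsionPair H T F) :
    IsHeart (forwardTilt T F) ∧ IsTorsionPair (forwardTilt T F) (shiftSet F 1) T ∧
    IsHeart (backwardTilt T F) ∧ IsTorsionPair (backwardTilt T F) F (shiftSet T (-1)) := by
  obtain ⟨h1, h2⟩ := forward_result hH htp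
  obtain ⟨h3, h4⟩ := forward_result (shift_heart hH) (shift_tp hH htp)
  rw [backward_eq htp] at h3 h4
  rw [shiftF_eq htp] at h4
  exact ⟨h1, h2, h3, h4⟩
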